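/- For the formal power series F(z,t) = ∏_{k≥1} (1-z^{2k-2}t^k)^{-1}(1-z^{2k}t^k)^{-22}(1-z^{2k+2}t^k)^{-1} in ℤ[[z,t]], the coefficient of z²tⁿ equals 23 for every n ≥ 2. -/

import Mathlib

open MvPowerSeries


/-- The ideal of power series all of whose monomials have `z`-degree at least 4. -/
noncomputable def SIdeal : Ideal (MvPowerSeries (Fin 2) ℤ) where
  carrier := {f | ∀ d : Fin 2 →₀ ℕ, d 0 < 4 → coeff d f = 0}
  add_mem' := fun {a b} ha hb d hd => by simp [map_add, ha d hd, hb d hd]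
  zero_mem' := fun d _ => by simp
  smul_mem' := by
    intro c f hf d hd
    rw [smul_eq_mul, coeff_mul]
    apply Finset.sum_eq_zero
    rintro ⟨d1, d2⟩ hmem
    rw [Finset.HasAntidiagonal.mem_antidiagonal] at hmem
    have h2 : d2 0 < 4 := by
      have : d1 0 + d2 0 = d 0 := by rw [← hmem]; simp
      omega
    simp [hf d2 h2]

lemma one_sub_pow_of_sq_zero {R : Type*} [CommRing R] {u : R} (hu : u * u = 0) (n : ℕ) :
    (1 - u) ^ n = 1 - (n : R) * u := by
  induction n with
  | zero => simp
  | succ n ih =>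
    rw [pow_succ, ih]
    push_cast
    linear_combination (n : R) * hu

lemma aux_inverse {R : Type*} [CommRing R] {a t u v : R} (hu : u * u = 0) (hv : v * v = 0)
    (huv : u * v = 0) (h1 : a * ((1 - t) * (1 - 22 * u) * (1 - v)) = 1) :
    a * (1 - t) = 1 + 22 * u + v := by
  have e1 : (1 - 22 * u) * (1 + 22 * u) = 1 := by linear_combination (-484 : R) * hu
  have e2 : (1 - v) * (1 + v) = 1 := by linear_combination -hv
  calc a * (1 - t) = a * (1 - t) * (((1 - 22*u) * (1 + 22*u)) * ((1 - v) * (1 + v))) := by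
        rw [e1, e2]; ring
    _ = (a * ((1 - t) * (1 - 22*u) * (1 - v))) * ((1 + 22*u) * (1 + v)) := by ring
    _ = 1 * ((1 + 22*u) * (1 + v)) := by rw [h1]
    _ = 1 + 22*u + v + 22*(u*v) := by ring
    _ = 1 + 22*u + v := by rw [huv]; ring

open MvPowerSeries in
/-- For the formal power series
`F(z,t) = ∏_{k≥1} (1-z^(2k-2)t^k)⁻¹ (1-z^(2k)t^k)⁻²² (1-z^(2k+2)t^k)⁻¹` in `ℤ[[z,t]]`
(Göttsche's generating function for the Poincaré polynomials of Hilbert schemes of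
points on a K3 surface), the coefficient of `z²tⁿ` equals `23` for every `n ≥ 2`.
Since the coefficient of `tⁿ` only involves the factors with `k ≤ n`, this is stated
via the finite partial products: `F N` denotes the inverse of the product of the
factors with `1 ≤ k ≤ N`, and the coefficient is taken for any `N ≥ n`.
(Variable `0` is `z`, variable `1` is `t`.) -/
theorem stmt_17 (F : ℕ → MvPowerSeries (Fin 2) ℤ)
    (hF : ∀ N : ℕ, F N * ∏ k ∈ Finset.Icc 1 N,
      ((1 - monomial (Finsupp.single (0 : Fin 2) (2 * k - 2) + Finsupp.single 1 k) 1) *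
        (1 - monomial (Finsupp.single (0 : Fin 2) (2 * k) + Finsupp.single 1 k) 1) ^ 22 *
        (1 - monomial (Finsupp.single (0 : Fin 2) (2 * k + 2) + Finsupp.single 1 k) 1)) = 1) :
    ∀ n : ℕ, 2 ≤ n → ∀ N : ℕ, n ≤ N →
      coeff (Finsupp.single (0 : Fin 2) 2 + Finsupp.single 1 n) (F N) = 23 := by
  classical
  intro n hn N hN
  have hN2 : 2 ≤ N := hn.trans hN
  set ee : ℕ → ℕ → (Fin 2 →₀ ℕ) :=
    fun a b => Finsupp.single (0 : Fin 2) a + Finsupp.single 1 b with hee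
  have hee0 : ∀ a b, (ee a b) 0 = a := by
    intro a b; simp [hee, Finsupp.single_apply]
  have hee1 : ∀ a b, (ee a b) 1 = b := by
    intro a b; simp [hee, Finsupp.single_apply]
  set M : ℕ → ℕ → MvPowerSeries (Fin 2) ℤ :=
    fun a b => monomial (ee a b) 1 with hM
  set π : MvPowerSeries (Fin 2) ℤ →+* MvPowerSeries (Fin 2) ℤ ⧸ SIdeal :=
    Ideal.Quotient.mk SIdeal with hπ
  -- monomials with z-degree ≥ 4 die in the quotient
  have hmem : ∀ (e : Fin 2 →₀ ℕ), 4 ≤ e 0 → (monomial e (1:ℤ)) ∈ SIdeal := by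
    intro e he d hd
    rw [coeff_monomial, if_neg]
    rintro rfl; omega
  have hz : ∀ (e : Fin 2 →₀ ℕ), 4 ≤ e 0 → π (monomial e (1:ℤ)) = 0 := by
    intro e he
    exact Ideal.Quotient.eq_zero_iff_mem.2 (hmem e he)
  have hz1 : ∀ a b, 4 ≤ a → π (1 - M a b) = 1 := by
    intro a b ha
    rw [map_sub, map_one, hM]
    simp [hz (ee a b) (by rw [hee0]; exact ha)]
  -- the product mod S
  have hprod : π (∏ k ∈ Finset.Icc 1 N,
      ((1 - monomial (Finsupp.single (0 : Fin 2) (2 * k - 2) + Finsupp.single 1 k) 1) *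
        (1 - monomial (Finsupp.single (0 : Fin 2) (2 * k) + Finsupp.single 1 k) 1) ^ 22 *
        (1 - monomial (Finsupp.single (0 : Fin 2) (2 * k + 2) + Finsupp.single 1 k) 1))) =
      π (1 - M 0 1) * π (1 - M 2 1) ^ 22 * π (1 - M 2 2) := by
    rw [map_prod]
    rw [← Finset.prod_subset (Finset.Icc_subset_Icc_right hN2 :
        Finset.Icc 1 2 ⊆ Finset.Icc 1 N)]
    · have h12 : Finset.Icc 1 2 = ({1, 2} : Finset ℕ) := rfl
      rw [h12, Finset.prod_insert (by decide), Finset.prod_singleton]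
      have hM01 : monomial (Finsupp.single (1:Fin 2) 1) (1:ℤ) = M 0 1 := by
        simp [hM, hee]
      have e1 : π ((1 - monomial (Finsupp.single (0 : Fin 2) (2 * 1 - 2) + Finsupp.single 1 1) 1) *
        (1 - monomial (Finsupp.single (0 : Fin 2) (2 * 1) + Finsupp.single 1 1) 1) ^ 22 *
        (1 - monomial (Finsupp.single (0 : Fin 2) (2 * 1 + 2) + Finsupp.single 1 1) 1)) =
          π (1 - M 0 1) * π (1 - M 2 1) ^ 22 := by
        simp only [map_mul, map_pow, map_sub, map_one]
        norm_num
        rw [hz (Finsupp.single (0:Fin 2) 4 + Finsupp.single 1 1) (by simp [Finsupp.single_apply]),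
          hM01]
        ring
      have e2 : π ((1 - monomial (Finsupp.single (0 : Fin 2) (2 * 2 - 2) + Finsupp.single 1 2) 1) *
        (1 - monomial (Finsupp.single (0 : Fin 2) (2 * 2) + Finsupp.single 1 2) 1) ^ 22 *
        (1 - monomial (Finsupp.single (0 : Fin 2) (2 * 2 + 2) + Finsupp.single 1 2) 1)) =
          π (1 - M 2 2) := by
        simp only [map_mul, map_pow, map_sub, map_one]
        norm_num
        rw [hz (Finsupp.single (0:Fin 2) 4 + Finsupp.single 1 2) (by simp [Finsupp.single_apply]),
          hz (Finsupp.single (0:Fin 2) 6 + Finsupp.single 1 2) (by simp [Finsupp.single_apply])]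
        ring
      rw [e1, e2]
    · intro k hk hk2
      simp only [Finset.mem_Icc] at hk hk2
      have h3 : 3 ≤ k := by omega
      rw [map_mul, map_mul, map_pow]
      rw [show (Finsupp.single (0 : Fin 2) (2 * k - 2) + Finsupp.single 1 k) = ee (2*k-2) k from rfl,
          show (Finsupp.single (0 : Fin 2) (2 * k) + Finsupp.single 1 k) = ee (2*k) k from rfl,
          show (Finsupp.single (0 : Fin 2) (2 * k + 2) + Finsupp.single 1 k) = ee (2*k+2) k from rfl]
      rw [hz1 _ _ (by omega), hz1 _ _ (by omega), hz1 _ _ (by omega)]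
      simp
  -- nilpotency relations in the quotient
  have hzmul : ∀ a b a' b' : ℕ, 4 ≤ a + a' → π (M a b) * π (M a' b') = 0 := by
    intro a b a' b' h
    rw [← map_mul]
    have hmm : M a b * M a' b' = monomial (ee a b + ee a' b') ((1:ℤ) * 1) :=
      monomial_mul_monomial _ _ _ _
    rw [hmm, one_mul]
    apply hz
    have : (ee a b + ee a' b') 0 = a + a' := by simp [hee, Finsupp.single_apply]
    omega
  set u := π (M 2 1) with hu'
  set v := π (M 2 2) with hv'
  set τ := π (M 0 1) with hτ'
  set a := π (F N) with ha'
  have hu : u * u = 0 := hzmul 2 1 2 1 (by norm_num)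
  have hv : v * v = 0 := hzmul 2 2 2 2 (by norm_num)
  have huv : u * v = 0 := hzmul 2 1 2 2 (by norm_num)
  have hpow : (1 - u) ^ 22 = 1 - 22 * u := by
    have h := one_sub_pow_of_sq_zero hu 22
    push_cast at h
    exact h
  have h1 : a * ((1 - τ) * (1 - 22 * u) * (1 - v)) = 1 := by
    have h := congrArg π (hF N)
    rw [map_mul, hprod, map_one] at h
    rw [map_sub, map_sub, map_sub, map_one, hpow] at h
    exact h
  have hkey : a * (1 - τ) = 1 + 22 * u + v := aux_inverse hu hv huv h1
  have h22 : monomial (ee 2 1) (22:ℤ) = 22 * monomial (ee 2 1) 1 := by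
    have := (monomial (ee 2 1)).map_smul (22:ℤ) 1
    simpa [zsmul_eq_mul, nsmul_eq_mul, Algebra.smul_def] using this
  have hmain : π (F N * (1 - M 0 1)) = π (1 + monomial (ee 2 1) (22:ℤ) + M 2 2) := by
    rw [map_mul, map_sub, map_one, map_add, map_add, map_one, h22, map_mul, map_ofNat]
    exact hkey
  have hcoeff : ∀ d : Fin 2 →₀ ℕ, d 0 < 4 →
      coeff d (F N * (1 - M 0 1)) = coeff d (1 + monomial (ee 2 1) (22:ℤ) + M 2 2) := by
    intro d hd
    have hsub : F N * (1 - M 0 1) - (1 + monomial (ee 2 1) (22:ℤ) + M 2 2) ∈ SIdeal :=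
      (Ideal.Quotient.eq).1 hmain
    have h := hsub d hd
    rw [map_sub] at h
    exact sub_eq_zero.1 h
  -- equality test for exponents
  have hinj : ∀ b b' : ℕ, ee 2 b = ee 2 b' ↔ b = b' := by
    intro b b'
    constructor
    · intro h
      have := congrArg (fun f : Fin 2 →₀ ℕ => f 1) h
      simpa [hee1] using this
    · rintro rfl; rfl
  have hne0 : ∀ b : ℕ, ee 2 b ≠ 0 := by
    intro b h
    have := congrArg (fun f : Fin 2 →₀ ℕ => f 0) h
    simp [hee0] at this
  -- RHS coefficients
  have hrhs : ∀ m : ℕ, coeff (ee 2 m) (1 + monomial (ee 2 1) (22:ℤ) + M 2 2) =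
      (if m = 1 then 22 else 0) + (if m = 2 then 1 else 0) := by
    intro m
    rw [map_add, map_add, coeff_one, if_neg (hne0 m)]
    rw [show M 2 2 = monomial (ee 2 2) 1 from rfl]
    rw [coeff_monomial, coeff_monomial]
    simp only [hinj]
    ring
  -- LHS coefficients
  have heq : ∀ m : ℕ, ee 2 (m+1) = ee 2 m + ee 0 1 := by
    intro m
    apply Finsupp.ext
    intro i
    fin_cases i <;> simp [hee, Finsupp.single_apply]
  have hM01 : M 0 1 = monomial (ee 0 1) 1 := rfl
  have hstep : ∀ m : ℕ, coeff (ee 2 (m+1)) (F N) - coeff (ee 2 m) (F N) =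
      (if m + 1 = 1 then 22 else 0) + (if m + 1 = 2 then 1 else 0) := by
    intro m
    have h := hcoeff (ee 2 (m+1)) (by rw [hee0]; norm_num)
    rw [hrhs] at h
    rw [mul_sub, mul_one, map_sub, hM01, heq m, coeff_add_mul_monomial, mul_one] at h
    rwa [← heq m] at h
  have hbase : coeff (ee 2 0) (F N) = 0 := by
    have h := hcoeff (ee 2 0) (by rw [hee0]; norm_num)
    rw [hrhs] at h
    rw [mul_sub, mul_one, map_sub, hM01, coeff_mul_monomial, if_neg] at h
    · simpa using h
    · intro hle
      have := hle 1
      simp only [hee1] at this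
      omega
  -- conclude by induction
  have hfin : ∀ m : ℕ, 2 ≤ m → coeff (ee 2 m) (F N) = 23 := by
    intro m hm
    induction m, hm using Nat.le_induction with
    | base =>
      have s0 := hstep 0
      have s1 := hstep 1
      norm_num at s0 s1
      omega
    | succ m hm ih =>
      have s := hstep m
      rw [if_neg (by omega), if_neg (by omega)] at s
      omega
  exact hfin n hn
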